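/- Let x ≺ y be dominant weights (in the dominance order for a fixed chamber), and let α be a positive root of minimum length such that x + α ⪯ y. Then x + α is winning for the numbers game with a cutoff, and if z is the resulting final (dominant) configuration, then x + α ⪯ z ⪯ y. -/

import Mathlib

open scoped BigOperators

variable {V : Type*} [NormedAddCommGroup V] [InnerProductSpace ℝ V]

/-- The pairing `⟨x, y^∨⟩ = 2(x,y)/(y,y)` of `x` with the coroot of `y`. -/
noncomputable def pairing (x y : V) : ℝ := 2 * (inner ℝ x y : ℝ) / (inner ℝ y y : ℝ)

/-- An irreducible, reduced, crystallographic root system in a Euclidean space `V`. -/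
structure RootSystemData (V : Type*) [NormedAddCommGroup V] [InnerProductSpace ℝ V] :
    Type _ where
  Δ : Set V
  finite : Δ.Finite
  nonzero : ∀ α ∈ Δ, α ≠ 0
  spanning : Submodule.span ℝ Δ = ⊤
  neg_mem : ∀ α ∈ Δ, -α ∈ Δ
  reduced : ∀ α ∈ Δ, ∀ c : ℝ, c • α ∈ Δ → c = 1 ∨ c = -1
  crystallographic : ∀ α ∈ Δ, ∀ β ∈ Δ, ∃ n : ℤ, pairing α β = n
  reflect_mem : ∀ α ∈ Δ, ∀ β ∈ Δ, β - pairing β α • α ∈ Δ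
  irreducible : ∀ s t : Set V, s ∪ t = Δ →
    (∀ α ∈ s, ∀ β ∈ t, (inner ℝ α β : ℝ) = 0) → s = ∅ ∨ t = ∅

variable {R : RootSystemData V}

/-- A base (system of simple roots) of the root system, corresponding to a Weyl chamber. -/
structure Base (R : RootSystemData V) where
  S : Finset V
  subset : ↑S ⊆ R.Δ
  indep : LinearIndependent ℝ ((↑) : {x : V // x ∈ S} → V)
  decomp : ∀ α ∈ R.Δ, ∃ c : V → ℤ, α = ∑ β ∈ S, (c β : ℝ) • β ∧
    ((∀ β ∈ S, 0 ≤ c β) ∨ (∀ β ∈ S, c β ≤ 0))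

/-- `x` is dominant with respect to the chamber given by the base `B`. -/
def IsDominant (B : Base R) (x : V) : Prop := ∀ α ∈ B.S, 0 ≤ pairing x α

/-- `β` is a positive root with respect to the base `B`. -/
def Base.IsPos (B : Base R) (β : V) : Prop :=
  β ∈ R.Δ ∧ ∃ c : V → ℕ, β = ∑ α ∈ B.S, (c α : ℝ) • α

/-- The dominance order: `y - x` is a nonnegative integer combination of simple roots. -/
def domLE (B : Base R) (x y : V) : Prop :=
  ∃ c : V → ℕ, y - x = ∑ α ∈ B.S, (c α : ℝ) • α

/-- `x` is a weight: its pairing with every coroot is an integer. -/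
def IsWeight (R : RootSystemData V) (x : V) : Prop :=
  ∀ α ∈ R.Δ, ∃ n : ℤ, pairing x α = n

/-- An ample (`T`-equivariant ample) polytope for the toric variety of the Weyl fan:
vertices `μ B` indexed by Weyl chambers (equivalently, bases `B`), such that vertices at
adjacent chambers differ by a positive integer multiple of the separating root. The chamber
adjacent to `B` across the wall of the simple root `α ∈ B.S` is the one whose base is the
reflection `s_α(B)`. -/
structure AmplePolytope (R : RootSystemData V) where
  μ : Base R → V
  weight : ∀ B : Base R, IsWeight R (μ B)
  ample : ∀ B B' : Base R, ∀ α ∈ B.S,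
    (∀ β : V, β ∈ B'.S ↔ ∃ γ ∈ B.S, β = γ - pairing γ α • α) →
    ∃ r : ℤ, 0 < r ∧ μ B - μ B' = (r : ℝ) • α

/-- The polytope `P` itself: the convex hull of its vertices. -/
noncomputable def AmplePolytope.carrier (P : AmplePolytope R) : Set V :=
  convexHull ℝ (Set.range P.μ)

/-- The root lattice `Y`. -/
def rootLattice (R : RootSystemData V) : AddSubgroup V := AddSubgroup.closure R.Δ

/-- `Λ(P)`: the lattice points of `P` lying in the coset `Y + μ_σ` of the root lattice. -/
noncomputable def latticePts (P : AmplePolytope R) : Set V :=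
  {x | x ∈ P.carrier ∧ ∀ B : Base R, x - P.μ B ∈ rootLattice R}

/-- The polytope is special: each vertex is dominant for its own chamber. -/
def IsSpecial (P : AmplePolytope R) : Prop := ∀ B : Base R, ∀ α ∈ B.S, 0 ≤ pairing (P.μ B) α

/-- One step of the numbers game: firing the vertex corresponding to the simple root `α`
replaces `x` by its reflection `x - ⟨x, α^∨⟩ α`. -/
noncomputable def fireRoot (x α : V) : V := x - pairing x α • α

/-- The result of playing the firing sequence `l` starting from `x`. -/
noncomputable def playRes (x : V) (l : List V) : V := l.foldl fireRoot x

/-- Legality of a firing sequence for the usual numbers game: each fired simple root has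
negative amplitude when fired. -/
def NGLegal (B : Base R) : V → List V → Prop
  | _, [] => True
  | x, α :: t => α ∈ B.S ∧ pairing x α < 0 ∧ NGLegal B (fireRoot x α) t

/-- A configuration is allowed in the numbers game with a cutoff: all amplitudes `≥ -1`. -/
def AllowedConf (B : Base R) (x : V) : Prop := ∀ α ∈ B.S, -1 ≤ pairing x α

/-- Legality for the numbers game with a cutoff: fired amplitudes are negative, and every
configuration along the way (including the first and last) is allowed. -/
def CutoffLegal (B : Base R) : V → List V → Prop
  | x, [] => AllowedConf B x
  | x, α :: t => AllowedConf B x ∧ α ∈ B.S ∧ pairing x α < 0 ∧ CutoffLegal B (fireRoot x α) t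

/-- `x` is winning for the numbers game with a cutoff. -/
def CutoffWinning (B : Base R) (x : V) : Prop :=
  ∃ l : List V, CutoffLegal B x l ∧ IsDominant B (playRes x l)

/-- The winning criterion: `⟨x, β^∨⟩ ≥ -1` for all positive roots `β`. -/
def WinningCrit (B : Base R) (x : V) : Prop := ∀ β : V, B.IsPos β → -1 ≤ pairing x β

/-- `α` is `P`-progressive for `x`: either `x` is dominant and `α` has minimum length among
simple roots with `x + α ⪯ μ`, or `⟨x, α^∨⟩ ≤ -1`. -/
def Progressive (B : Base R) (P : AmplePolytope R) (x α : V) : Prop :=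
  α ∈ B.S ∧
    ((IsDominant B x ∧ domLE B (x + α) (P.μ B) ∧
        ∀ β ∈ B.S, domLE B (x + β) (P.μ B) → ‖α‖ ≤ ‖β‖) ∨
      pairing x α ≤ -1)


section Aux

local notation "⟪" x ", " y "⟫" => (inner ℝ x y : ℝ)

variable {V : Type*} [NormedAddCommGroup V] [InnerProductSpace ℝ V]

lemma inner_self_pos' {γ : V} (h : γ ≠ 0) : 0 < ⟪γ, γ⟫ := by
  rcases lt_or_eq_of_le (real_inner_self_nonneg (x := γ)) with h' | h'
  · exact h'
  · exact absurd (real_inner_self_nonpos.mp h'.ge) h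

lemma inner_eq_pairing {v γ : V} (h : γ ≠ 0) : ⟪v, γ⟫ = pairing v γ * ⟪γ, γ⟫ / 2 := by
  have hg : ⟪γ, γ⟫ ≠ 0 := ne_of_gt (inner_self_pos' h)
  unfold pairing
  field_simp

lemma pairing_self {γ : V} (h : γ ≠ 0) : pairing γ γ = 2 := by
  have hg : ⟪γ, γ⟫ ≠ 0 := ne_of_gt (inner_self_pos' h)
  unfold pairing
  field_simp

lemma pairing_add_left (a b γ : V) : pairing (a + b) γ = pairing a γ + pairing b γ := by
  unfold pairing
  rw [inner_add_left]
  ring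

lemma pairing_sub_left (a b γ : V) : pairing (a - b) γ = pairing a γ - pairing b γ := by
  unfold pairing
  rw [inner_sub_left]
  ring

lemma pairing_smul_left (t : ℝ) (a γ : V) : pairing (t • a) γ = t * pairing a γ := by
  unfold pairing
  rw [real_inner_smul_left]
  ring

lemma pairing_nonneg_of_inner {v γ : V} (h : 0 ≤ ⟪v, γ⟫) : 0 ≤ pairing v γ := by
  unfold pairing
  exact div_nonneg (by linarith) real_inner_self_nonneg

lemma pairing_pos_of_inner {v γ : V} (hγ : γ ≠ 0) (h : 0 < ⟪v, γ⟫) : 0 < pairing v γ := by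
  unfold pairing
  exact div_pos (by linarith) (inner_self_pos' hγ)

lemma inner_pos_of_pairing {v γ : V} (hγ : γ ≠ 0) (h : 0 < pairing v γ) : 0 < ⟪v, γ⟫ := by
  rw [inner_eq_pairing hγ]
  have := inner_self_pos' hγ
  positivity

lemma inner_nonneg_of_pairing {v γ : V} (hγ : γ ≠ 0) (h : 0 ≤ pairing v γ) : 0 ≤ ⟪v, γ⟫ := by
  rw [inner_eq_pairing hγ]
  have := inner_self_pos' hγ
  positivity

variable {R : RootSystemData V}

/-- helper: sum of an indicator family over the base -/
lemma sum_single [DecidableEq V] (B : Base R) {γ : V} (hγ : γ ∈ B.S) (f : V → V) :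
    ∑ δ ∈ B.S, (if δ = γ then f δ else 0) = f γ := by
  rw [Finset.sum_ite_eq' B.S γ f]
  simp [hγ]

lemma sum_single_smul [DecidableEq V] (B : Base R) {γ : V} (hγ : γ ∈ B.S) (t : ℝ) :
    ∑ δ ∈ B.S, (if δ = γ then t else 0) • δ = t • γ := by
  have : ∀ δ ∈ B.S, (if δ = γ then t else 0) • δ = (if δ = γ then t • δ else 0) := by
    intro δ _
    split <;> simp_all
  rw [Finset.sum_congr rfl this, sum_single B hγ]

/-- coefficient uniqueness from linear independence of the base -/
lemma coeff_unique (B : Base R) (c d : V → ℝ)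
    (h : ∑ δ ∈ B.S, c δ • δ = ∑ δ ∈ B.S, d δ • δ) : ∀ δ ∈ B.S, c δ = d δ := by
  intro δ hδ
  have hsum : ∑ i ∈ B.S.attach, (c i.1 - d i.1) • (i.1 : V) = 0 := by
    have h1 : ∑ i ∈ B.S.attach, c i.1 • (i.1 : V) = ∑ δ ∈ B.S, c δ • δ :=
      B.S.sum_attach (fun δ => c δ • δ)
    have h2 : ∑ i ∈ B.S.attach, d i.1 • (i.1 : V) = ∑ δ ∈ B.S, d δ • δ :=
      B.S.sum_attach (fun δ => d δ • δ)
    simp only [sub_smul, Finset.sum_sub_distrib, h1, h2, h, sub_self]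
  have := linearIndependent_iff'.mp B.indep B.S.attach (fun i => c i.1 - d i.1) hsum
    ⟨δ, hδ⟩ (B.S.mem_attach _)
  have h' : c δ - d δ = 0 := this
  linarith

end Aux


section Aux2

local notation "⟪" x ", " y "⟫" => (inner ℝ x y : ℝ)

variable {V : Type*} [NormedAddCommGroup V] [InnerProductSpace ℝ V] {R : RootSystemData V}

/-- distinct simple roots form obtuse angles -/
lemma simple_obtuse [DecidableEq V] (B : Base R) {γ δ : V} (hγ : γ ∈ B.S) (hδ : δ ∈ B.S)
    (hne : γ ≠ δ) : ⟪γ, δ⟫ ≤ 0 := by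
  by_contra hpos
  push_neg at hpos
  have hγΔ : γ ∈ R.Δ := B.subset hγ
  have hδΔ : δ ∈ R.Δ := B.subset hδ
  have hδ0 : δ ≠ 0 := R.nonzero δ hδΔ
  obtain ⟨n, hn⟩ := R.crystallographic γ hγΔ δ hδΔ
  have hp : 0 < pairing γ δ := pairing_pos_of_inner hδ0 hpos
  have hn1 : 1 ≤ n := by
    rw [hn] at hp
    exact_mod_cast hp
  have hρ : γ - pairing γ δ • δ ∈ R.Δ := R.reflect_mem δ hδΔ γ hγΔ
  obtain ⟨e, he, hsig⟩ := B.decomp _ hρ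
  have hrep : γ - pairing γ δ • δ =
      ∑ β ∈ B.S, ((if β = γ then (1:ℝ) else 0) + (if β = δ then -(n:ℝ) else 0)) • β := by
    rw [show ∀ (a b : V → ℝ), (∑ β ∈ B.S, (a β + b β) • β) =
        (∑ β ∈ B.S, a β • β) + ∑ β ∈ B.S, b β • β from by
      intro a b; rw [← Finset.sum_add_distrib]; exact Finset.sum_congr rfl fun β _ => add_smul _ _ _]
    rw [sum_single_smul B hγ, sum_single_smul B hδ, hn]
    simp [sub_eq_add_neg, neg_smul]
  have huniq := coeff_unique B _ _ (he.symm.trans hrep)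
  have h1 : (e γ : ℝ) = 1 := by
    have := huniq γ hγ
    simpa [hne] using this
  have h2 : (e δ : ℝ) = -(n:ℝ) := by
    have := huniq δ hδ
    simpa [Ne.symm hne] using this
  rcases hsig with hs | hs
  · have := hs δ hδ
    have : (0:ℝ) ≤ (e δ : ℝ) := by exact_mod_cast this
    rw [h2] at this
    have : (n:ℝ) ≤ 0 := by linarith
    have : n ≤ 0 := by exact_mod_cast this
    omega
  · have := hs γ hγ
    have : (e γ : ℝ) ≤ 0 := by exact_mod_cast this
    rw [h1] at this
    linarith

/-- a dominant element pairs nonnegatively with every positive root -/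
lemma dominant_inner_nonneg (B : Base R) {x β : V} (hxd : IsDominant B x) (hβ : B.IsPos β) :
    0 ≤ ⟪x, β⟫ := by
  obtain ⟨hβΔ, b, hb⟩ := hβ
  rw [hb, inner_sum]
  apply Finset.sum_nonneg
  intro δ hδ
  rw [real_inner_smul_right]
  have hδ0 : δ ≠ 0 := R.nonzero δ (B.subset hδ)
  exact mul_nonneg (by positivity) (inner_nonneg_of_pairing hδ0 (hxd δ hδ))

lemma dominant_pairing_nonneg (B : Base R) {x β : V} (hxd : IsDominant B x) (hβ : B.IsPos β) :
    0 ≤ pairing x β :=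
  pairing_nonneg_of_inner (dominant_inner_nonneg B hxd hβ)

/-- if a nonneg combination has positive inner product with a simple root, the
coefficient at that root is at least 1 -/
lemma coeff_pos [DecidableEq V] (B : Base R) (c : V → ℕ) {γ : V} (hγ : γ ∈ B.S)
    (h : 0 < ⟪∑ δ ∈ B.S, (c δ : ℝ) • δ, γ⟫) : 1 ≤ c γ := by
  by_contra hc
  push_neg at hc
  interval_cases h' : c γ
  rw [sum_inner] at h
  have : ∀ δ ∈ B.S, ⟪(c δ : ℝ) • δ, γ⟫ ≤ 0 := by
    intro δ hδ
    rw [real_inner_smul_left]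
    by_cases hdg : δ = γ
    · subst hdg; rw [h']; simp
    · exact mul_nonpos_of_nonneg_of_nonpos (by positivity) (simple_obtuse B hδ hγ hdg)
  linarith [Finset.sum_nonpos this]

/-- simple roots are positive -/
lemma isPos_simple [DecidableEq V] (B : Base R) {γ : V} (hγ : γ ∈ B.S) : B.IsPos γ := by
  refine ⟨B.subset hγ, fun δ => if δ = γ then 1 else 0, ?_⟩
  have hcongr : ∀ δ ∈ B.S, (((if δ = γ then 1 else 0 : ℕ) : ℝ)) • δ =
      (if δ = γ then (1:ℝ) else 0) • δ := by
    intro δ _; split <;> simp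
  rw [Finset.sum_congr rfl hcongr, sum_single_smul B hγ, one_smul]

/-- master positivity lemma -/
lemma isPos_of_real_coeff (B : Base R) {β : V} (hβΔ : β ∈ R.Δ) (r : V → ℝ)
    (hsum : β = ∑ δ ∈ B.S, r δ • δ) (hpos : ∃ δ ∈ B.S, 0 < r δ) : B.IsPos β := by
  obtain ⟨d, hd, hsig⟩ := B.decomp β hβΔ
  have huniq := coeff_unique B _ _ (hd.symm.trans hsum)
  obtain ⟨δ₀, hδ₀, hr₀⟩ := hpos
  have hnn : ∀ δ ∈ B.S, 0 ≤ d δ := by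
    rcases hsig with hs | hs
    · exact hs
    · exfalso
      have h1 : (d δ₀ : ℝ) = r δ₀ := huniq δ₀ hδ₀
      have h2 : (d δ₀ : ℝ) ≤ 0 := by exact_mod_cast hs δ₀ hδ₀
      linarith
  refine ⟨hβΔ, fun δ => (d δ).toNat, ?_⟩
  rw [hd]
  apply Finset.sum_congr rfl
  intro δ hδ
  have hc : (((d δ).toNat : ℕ) : ℝ) = ((d δ : ℤ) : ℝ) := by
    exact_mod_cast congrArg (fun z : ℤ => (z : ℝ)) (Int.toNat_of_nonneg (hnn δ hδ))
  rw [hc]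

end Aux2


section Aux3

local notation "⟪" x ", " y "⟫" => (inner ℝ x y : ℝ)

variable {V : Type*} [NormedAddCommGroup V] [InnerProductSpace ℝ V] {R : RootSystemData V}

lemma inner_reflect_reflect {γ : V} (hγ : γ ≠ 0) (v w : V) :
    ⟪v - pairing v γ • γ, w - pairing w γ • γ⟫ = ⟪v, w⟫ := by
  have hv : ⟪v, γ⟫ = pairing v γ * ⟪γ, γ⟫ / 2 := inner_eq_pairing hγ
  have hw : ⟪w, γ⟫ = pairing w γ * ⟪γ, γ⟫ / 2 := inner_eq_pairing hγ
  simp only [inner_sub_left, inner_sub_right, real_inner_smul_left, real_inner_smul_right]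
  rw [real_inner_comm w γ, hv, hw]
  ring

lemma pairing_reflect_reflect {γ : V} (hγ : γ ≠ 0) (v w : V) :
    pairing (v - pairing v γ • γ) (w - pairing w γ • γ) = pairing v w := by
  have h0 : pairing (v - pairing v γ • γ) (w - pairing w γ • γ) =
      2 * ⟪v - pairing v γ • γ, w - pairing w γ • γ⟫ /
        ⟪w - pairing w γ • γ, w - pairing w γ • γ⟫ := rfl
  rw [h0, inner_reflect_reflect hγ v w, inner_reflect_reflect hγ w w]
  rfl

lemma pairing_reflect_self {γ : V} (hγ : γ ≠ 0) (v : V) :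
    pairing (v - pairing v γ • γ) γ = - pairing v γ := by
  rw [pairing_sub_left, pairing_smul_left, pairing_self hγ]
  ring

lemma reflect_reflect {γ : V} (hγ : γ ≠ 0) (v : V) :
    (v - pairing v γ • γ) - pairing (v - pairing v γ • γ) γ • γ = v := by
  rw [pairing_reflect_self hγ, neg_smul, sub_neg_eq_add]
  abel

lemma inner_reflect_self {γ : V} (hγ : γ ≠ 0) (v : V) :
    ⟪v - pairing v γ • γ, v - pairing v γ • γ⟫ = ⟪v, v⟫ :=
  inner_reflect_reflect hγ v v

/-- the product of the two pairings of nonproportional roots is less than 4 -/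
lemma pairing_product_lt_four {β γ : V} (hβ : β ∈ R.Δ) (hγ : γ ∈ R.Δ)
    (h1 : β ≠ γ) (h2 : β ≠ -γ) : pairing β γ * pairing γ β < 4 := by
  have hβ0 : β ≠ 0 := R.nonzero β hβ
  have hγ0 : γ ≠ 0 := R.nonzero γ hγ
  have hγn : ‖γ‖ ≠ 0 := norm_ne_zero_iff.mpr hγ0
  have hupper : ⟪β, γ⟫ < ‖β‖ * ‖γ‖ := by
    rw [inner_lt_norm_mul_iff_real]
    intro heq
    have hb : β = (‖γ‖⁻¹ * ‖β‖) • γ := by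
      have h := congrArg (fun t => (‖γ‖)⁻¹ • t) heq
      simp only [smul_smul] at h
      rw [inv_mul_cancel₀ hγn, one_smul] at h
      exact h
    rcases R.reduced γ hγ _ (hb ▸ hβ) with hc | hc
    · rw [hc, one_smul] at hb; exact h1 hb
    · have : (0:ℝ) < ‖γ‖⁻¹ * ‖β‖ := by positivity
      rw [hc] at this; linarith
  have hlower : -(‖β‖ * ‖γ‖) < ⟪β, γ⟫ := by
    have h2' : β ≠ -(-γ) := by simpa using h1
    have : ⟪β, -γ⟫ < ‖β‖ * ‖-γ‖ := by
      rw [inner_lt_norm_mul_iff_real]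
      intro heq
      have hγn' : ‖-γ‖ ≠ 0 := by simpa using hγn
      have hb : β = (‖-γ‖⁻¹ * ‖β‖) • (-γ) := by
        have h := congrArg (fun t => (‖-γ‖)⁻¹ • t) heq
        simp only [smul_smul] at h
        rw [inv_mul_cancel₀ hγn', one_smul] at h
        exact h
      have hβ' : (‖-γ‖⁻¹ * ‖β‖) • (-γ) ∈ R.Δ := hb ▸ hβ
      rcases R.reduced (-γ) (R.neg_mem γ hγ) _ hβ' with hc | hc
      · rw [hc, one_smul] at hb; exact h2 hb
      · have : (0:ℝ) < ‖-γ‖⁻¹ * ‖β‖ := by positivity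
        rw [hc] at this; linarith
    rw [inner_neg_right, norm_neg] at this
    linarith
  have hsq : ⟪β, γ⟫ * ⟪β, γ⟫ < (‖β‖ * ‖γ‖) * (‖β‖ * ‖γ‖) := by nlinarith
  have heq : pairing β γ * pairing γ β = 4 * (⟪β, γ⟫ * ⟪β, γ⟫) / (⟪β, β⟫ * ⟪γ, γ⟫) := by
    unfold pairing
    rw [real_inner_comm γ β]
    ring
  rw [heq, div_lt_iff₀ (mul_pos (inner_self_pos' hβ0) (inner_self_pos' hγ0))]
  have hbb := real_inner_self_eq_norm_mul_norm β
  have hgg := real_inner_self_eq_norm_mul_norm γ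
  nlinarith

/-- a positive root distinct from a simple root has positive coefficient off that root -/
lemma exists_offcoeff (B : Base R) {β γ : V} (b : V → ℕ) (hβΔ : β ∈ R.Δ)
    (hb : β = ∑ δ ∈ B.S, (b δ : ℝ) • δ) (hγ : γ ∈ B.S) (hne : β ≠ γ) :
    ∃ δ₀ ∈ B.S, δ₀ ≠ γ ∧ 0 < b δ₀ := by
  classical
  by_contra hno
  push_neg at hno
  have hz : ∀ δ ∈ B.S, δ ≠ γ → b δ = 0 := by
    intro δ hδ hδγ
    have := hno δ hδ hδγ
    omega
  have hβγ : β = ((b γ : ℝ)) • γ := by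
    rw [hb, ← sum_single_smul B hγ ((b γ : ℝ))]
    apply Finset.sum_congr rfl
    intro δ hδ
    by_cases hd : δ = γ
    · subst hd; simp
    · rw [hz δ hδ hd, if_neg hd]; simp
  rcases R.reduced γ (B.subset hγ) _ (hβγ ▸ hβΔ) with hc | hc
  · rw [hc, one_smul] at hβγ; exact hne hβγ
  · have : (0:ℝ) ≤ (b γ : ℝ) := by positivity
    rw [hc] at this; linarith

/-- reflecting a non-simple positive root in a simple root: explicit witness with
smaller coefficient sum -/
lemma reflect_witness [DecidableEq V] (B : Base R) {β γ : V} (b : V → ℕ) (hβΔ : β ∈ R.Δ)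
    (hb : β = ∑ δ ∈ B.S, (b δ : ℝ) • δ) (hγ : γ ∈ B.S) (hβS : β ∉ B.S) {n : ℤ}
    (hn : pairing β γ = n) (hn1 : 1 ≤ n) :
    ∃ b'' : V → ℕ, (β - pairing β γ • γ ∈ R.Δ) ∧
      (β - pairing β γ • γ = ∑ δ ∈ B.S, (b'' δ : ℝ) • δ) ∧
      (∑ δ ∈ B.S, b'' δ) < (∑ δ ∈ B.S, b δ) := by
  have hγΔ : γ ∈ R.Δ := B.subset hγ
  have hmem : β - pairing β γ • γ ∈ R.Δ := R.reflect_mem γ hγΔ β hβΔ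
  have hne : β ≠ γ := fun h => hβS (h ▸ hγ)
  set r : V → ℝ := fun δ => (b δ : ℝ) + (if δ = γ then -(n:ℝ) else 0) with hr_def
  have hr : β - pairing β γ • γ = ∑ δ ∈ B.S, r δ • δ := by
    have : ∑ δ ∈ B.S, r δ • δ =
        (∑ δ ∈ B.S, (b δ : ℝ) • δ) + ∑ δ ∈ B.S, (if δ = γ then -(n:ℝ) else 0) • δ := by
      rw [← Finset.sum_add_distrib]
      exact Finset.sum_congr rfl fun δ _ => add_smul _ _ _
    rw [this, sum_single_smul B hγ, ← hb, hn, neg_smul]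
    abel
  obtain ⟨e, he, hsig⟩ := B.decomp _ hmem
  have huniq := coeff_unique B _ _ (he.symm.trans hr)
  obtain ⟨δ₀, hδ₀S, hδ₀γ, hδ₀pos⟩ := exists_offcoeff B b hβΔ hb hγ hne
  have hnn : ∀ δ ∈ B.S, 0 ≤ e δ := by
    rcases hsig with hs | hs
    · exact hs
    · exfalso
      have h1 : (e δ₀ : ℝ) = r δ₀ := huniq δ₀ hδ₀S
      have h2 : r δ₀ = (b δ₀ : ℝ) := by simp [hr_def, hδ₀γ]
      have h3 : (e δ₀ : ℝ) ≤ 0 := by exact_mod_cast hs δ₀ hδ₀S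
      rw [h1, h2] at h3
      have : 0 < (b δ₀ : ℝ) := by exact_mod_cast hδ₀pos
      linarith
  have hγcoeff : (n : ℝ) ≤ (b γ : ℝ) := by
    have h1 : (e γ : ℝ) = r γ := huniq γ hγ
    have h2 : r γ = (b γ : ℝ) - (n : ℝ) := by simp [hr_def, sub_eq_add_neg]
    have h3 : (0:ℝ) ≤ (e γ : ℝ) := by exact_mod_cast hnn γ hγ
    rw [h1, h2] at h3
    linarith
  have htn : n.toNat ≤ b γ := by
    have : (n : ℝ) ≤ ((b γ : ℤ) : ℝ) := by exact_mod_cast hγcoeff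
    have h4 : n ≤ (b γ : ℤ) := by exact_mod_cast this
    omega
  have htn1 : 1 ≤ n.toNat := by omega
  refine ⟨fun δ => if δ = γ then b γ - n.toNat else b δ, hmem, ?_, ?_⟩
  · rw [hr]
    apply Finset.sum_congr rfl
    intro δ hδ
    by_cases hd : δ = γ
    · subst hd
      have hcast : ((b δ - n.toNat : ℕ) : ℝ) = (b δ : ℝ) - (n : ℝ) := by
        rw [Nat.cast_sub htn]
        congr 1
        exact_mod_cast Int.toNat_of_nonneg (by omega : (0:ℤ) ≤ n)
      simp [hr_def, hcast, sub_eq_add_neg]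
    · simp [hr_def, hd]
  · apply Finset.sum_lt_sum
    · intro δ hδ
      by_cases hd : δ = γ
      · subst hd; rw [if_pos rfl]; omega
      · rw [if_neg hd]
    · exact ⟨γ, hγ, by rw [if_pos rfl]; omega⟩

/-- the reflection of a positive root (other than the simple root itself) is positive -/
lemma isPos_reflect [DecidableEq V] (B : Base R) {β γ : V} (hβ : B.IsPos β) (hγ : γ ∈ B.S)
    (hne : β ≠ γ) : B.IsPos (β - pairing β γ • γ) := by
  obtain ⟨hβΔ, b, hb⟩ := hβ
  have hγΔ : γ ∈ R.Δ := B.subset hγ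
  have hmem : β - pairing β γ • γ ∈ R.Δ := R.reflect_mem γ hγΔ β hβΔ
  obtain ⟨δ₀, hδ₀S, hδ₀γ, hδ₀pos⟩ := exists_offcoeff B b hβΔ hb hγ hne
  apply isPos_of_real_coeff B hmem
    (fun δ => (b δ : ℝ) + (if δ = γ then -(pairing β γ) else 0))
  · have : ∑ δ ∈ B.S, ((b δ : ℝ) + (if δ = γ then -(pairing β γ) else 0)) • δ =
        (∑ δ ∈ B.S, (b δ : ℝ) • δ) + ∑ δ ∈ B.S, (if δ = γ then -(pairing β γ) else 0) • δ := by
      rw [← Finset.sum_add_distrib]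
      exact Finset.sum_congr rfl fun δ _ => add_smul _ _ _
    rw [this, sum_single_smul B hγ, ← hb, neg_smul]
    abel
  · refine ⟨δ₀, hδ₀S, ?_⟩
    simp only [if_neg hδ₀γ, add_zero]
    exact_mod_cast hδ₀pos

lemma domLE_refl (B : Base R) (v : V) : domLE B v v :=
  ⟨fun _ => 0, by simp⟩

lemma domLE_add_right [DecidableEq V] (B : Base R) {u v γ : V} (h : domLE B u v)
    (hγ : γ ∈ B.S) : domLE B u (v + γ) := by
  obtain ⟨c, hc⟩ := h
  refine ⟨fun δ => c δ + (if δ = γ then 1 else 0), ?_⟩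
  have : ∀ δ ∈ B.S, ((c δ + (if δ = γ then 1 else 0) : ℕ) : ℝ) • δ =
      (c δ : ℝ) • δ + (if δ = γ then (1:ℝ) else 0) • δ := by
    intro δ _
    rw [← add_smul]
    congr 1
    split <;> simp
  rw [Finset.sum_congr rfl this, Finset.sum_add_distrib, sum_single_smul B hγ, ← hc, one_smul]
  abel

lemma domLE_step [DecidableEq V] (B : Base R) {v y γ : V} (h : domLE B v y) (hγ : γ ∈ B.S)
    (hp : 0 < pairing (y - v) γ) : domLE B (v + γ) y := by
  obtain ⟨c, hc⟩ := h
  have hγ0 : γ ≠ 0 := R.nonzero γ (B.subset hγ)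
  have hip : 0 < ⟪y - v, γ⟫ := inner_pos_of_pairing hγ0 hp
  rw [hc] at hip
  have hcγ : 1 ≤ c γ := coeff_pos B c hγ hip
  refine ⟨fun δ => c δ - (if δ = γ then 1 else 0), ?_⟩
  have heq : ∀ δ ∈ B.S, ((c δ - (if δ = γ then 1 else 0) : ℕ) : ℝ) • δ =
      (c δ : ℝ) • δ - (if δ = γ then (1:ℝ) else 0) • δ := by
    intro δ _
    rw [← sub_smul]
    congr 1
    by_cases hd : δ = γ
    · subst hd
      rw [if_pos rfl, if_pos rfl, Nat.cast_sub hcγ]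
      simp
    · simp [hd]
  rw [Finset.sum_congr rfl heq, Finset.sum_sub_distrib, sum_single_smul B hγ, ← hc, one_smul]
  abel

end Aux3


section Aux4

local notation "⟪" x ", " y "⟫" => (inner ℝ x y : ℝ)

variable {V : Type*} [NormedAddCommGroup V] [InnerProductSpace ℝ V] {R : RootSystemData V}

lemma isPos_add_simple [DecidableEq V] (B : Base R) {α' γ : V} (h : B.IsPos α')
    (hγ : γ ∈ B.S) (hmem : α' + γ ∈ R.Δ) : B.IsPos (α' + γ) := by
  obtain ⟨_, a, ha⟩ := h
  have h0 : domLE B 0 α' := ⟨a, by simpa using ha⟩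
  obtain ⟨c, hc⟩ := domLE_add_right B h0 hγ
  exact ⟨hmem, c, by simpa using hc⟩

lemma ne_neg_of_witness (B : Base R) {u w : V} (a b : V → ℕ)
    (hu : u = ∑ δ ∈ B.S, (a δ : ℝ) • δ) (hw : w = ∑ δ ∈ B.S, (b δ : ℝ) • δ)
    (hu0 : u ≠ 0) : u ≠ -w := by
  intro h
  have huw : u + w = 0 := by rw [h]; abel
  have hsum : ∑ δ ∈ B.S, ((a δ : ℝ) + (b δ : ℝ)) • δ = ∑ δ ∈ B.S, (0:ℝ) • δ := by
    have h1 : ∑ δ ∈ B.S, ((a δ : ℝ) + (b δ : ℝ)) • δ = u + w := by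
      rw [hu, hw, ← Finset.sum_add_distrib]
      exact Finset.sum_congr rfl fun δ _ => add_smul _ _ _
    rw [h1, huw]
    simp
  have hz := coeff_unique B _ _ hsum
  apply hu0
  rw [hu]
  apply Finset.sum_eq_zero
  intro δ hδ
  have h1 := hz δ hδ
  have h2 : (0:ℝ) ≤ (a δ : ℝ) := by positivity
  have h3 : (0:ℝ) ≤ (b δ : ℝ) := by positivity
  have h4 : (a δ : ℝ) = 0 := by linarith
  rw [h4, zero_smul]

lemma simple_witness [DecidableEq V] (B : Base R) {γ : V} (hγ : γ ∈ B.S) :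
    γ = ∑ δ ∈ B.S, ((if δ = γ then (1:ℕ) else 0 : ℕ) : ℝ) • δ := by
  obtain ⟨_, c, hc⟩ := isPos_simple B hγ
  have hcongr : ∀ δ ∈ B.S, (((if δ = γ then 1 else 0 : ℕ) : ℝ)) • δ =
      (if δ = γ then (1:ℝ) else 0) • δ := by
    intro δ _; split <;> simp
  rw [Finset.sum_congr rfl hcongr, sum_single_smul B hγ, one_smul]

set_option maxHeartbeats 2000000 in
/-- The key lemma: with `x, y` dominant and `α` of minimal length among positive roots with
`x + α ⪯ y`, no positive root pairs `≤ -2` with any `x + α'` for `α'` of minimal length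
with `x + α' ⪯ y`.  Strong induction on the height of the offending positive root. -/
lemma claimA_aux [DecidableEq V] (B : Base R) (x y αm : V)
    (hxd : IsDominant B x) (hyd : IsDominant B y) (hxw : IsWeight R x)
    (hmin : ∀ β : V, B.IsPos β → domLE B (x + β) y → ‖αm‖ ≤ ‖β‖) :
    ∀ N : ℕ, ∀ α' β' : V, B.IsPos α' → ‖α'‖ ≤ ‖αm‖ → domLE B (x + α') y →
      ∀ b : V → ℕ, β' ∈ R.Δ → β' = ∑ δ ∈ B.S, (b δ : ℝ) • δ → (∑ δ ∈ B.S, b δ) < N →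
      pairing (x + α') β' ≤ -2 → False := by
  intro N
  induction N with
  | zero => intro α' β' _ _ _ b _ _ hlt _; omega
  | succ N IH =>
    intro α' β' hα'pos hα'n hα'le b hβ'Δ hb hblt hpair
    obtain ⟨hα'Δ, a, ha⟩ := hα'pos
    have hβ'0 : β' ≠ 0 := R.nonzero β' hβ'Δ
    have hα'0 : α' ≠ 0 := R.nonzero α' hα'Δ
    have hβ'ip : B.IsPos β' := ⟨hβ'Δ, b, hb⟩
    have hpx : 0 ≤ pairing x β' := dominant_pairing_nonneg B hxd hβ'ip
    have hadd := pairing_add_left x α' β'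
    have hpαβ : pairing α' β' ≤ -2 := by linarith
    obtain ⟨k, hk⟩ := R.crystallographic α' hα'Δ β' hβ'Δ
    have hk2 : (k:ℝ) ≤ -2 := by rw [← hk]; exact hpαβ
    have hne1 : α' ≠ β' := by
      intro h; rw [h, pairing_self hβ'0] at hpαβ; linarith
    have hne2 : α' ≠ -β' := ne_neg_of_witness B a b ha hb hα'0
    -- the pairing in the other direction is exactly -1
    obtain ⟨m, hm⟩ := R.crystallographic β' hβ'Δ α' hα'Δ
    have hprod := pairing_product_lt_four hα'Δ hβ'Δ hne1 hne2
    have hiαβ : ⟪α', β'⟫ < 0 := by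
      rw [inner_eq_pairing hβ'0]
      nlinarith [inner_self_pos' hβ'0]
    have hm_neg : (m:ℝ) < 0 := by
      have h1 : ⟪β', α'⟫ < 0 := by rw [real_inner_comm]; exact hiαβ
      have h2 : pairing β' α' < 0 := by
        rw [inner_eq_pairing hα'0] at h1
        nlinarith [inner_self_pos' hα'0]
      rw [hm] at h2; exact h2
    have hm1 : m = -1 := by
      have hk' : k ≤ -2 := by exact_mod_cast hk2
      have hm' : m ≤ -1 := by
        have : m < 0 := by exact_mod_cast hm_neg
        omega
      by_contra hcon
      have hm2 : m ≤ -2 := by omega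
      have hm2' : (m:ℝ) ≤ -2 := by exact_mod_cast hm2
      rw [hk, hm] at hprod
      nlinarith
    have hsumΔ : α' + β' ∈ R.Δ := by
      have hr := R.reflect_mem α' hα'Δ β' hβ'Δ
      rw [hm, hm1] at hr
      have h2 : β' - (((-1:ℤ)):ℝ) • α' = α' + β' := by
        push_cast
        rw [neg_one_smul, sub_neg_eq_add, add_comm]
      rwa [h2] at hr
    have e2 := real_inner_self_eq_norm_mul_norm α'
    have e3 := real_inner_self_eq_norm_mul_norm αm
    by_cases hβS : β' ∈ B.S
    · -- base case: β' is simple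
      have hyβ : 0 ≤ pairing y β' := hyd β' hβS
      obtain ⟨c, hc⟩ := hα'le
      have hdom2 : domLE B (x + (α' + β')) y := by
        rw [show x + (α' + β') = (x + α') + β' from by abel]
        exact domLE_step B ⟨c, hc⟩ hβS (by rw [pairing_sub_left]; linarith)
      have hip2 : B.IsPos (α' + β') := isPos_add_simple B ⟨hα'Δ, a, ha⟩ hβS hsumΔ
      have hminle := hmin _ hip2 hdom2
      have hiαβ' : ⟪α', β'⟫ ≤ -⟪β', β'⟫ := by
        rw [inner_eq_pairing hβ'0]
        nlinarith [inner_self_pos' hβ'0]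
      have hexp : ⟪α' + β', α' + β'⟫ = ⟪α', α'⟫ + 2 * ⟪α', β'⟫ + ⟪β', β'⟫ := by
        simp only [inner_add_left, inner_add_right]
        rw [real_inner_comm β' α']
        ring
      have hnormsum : ⟪α' + β', α' + β'⟫ < ⟪α', α'⟫ := by
        nlinarith [inner_self_pos' hβ'0]
      have e1 := real_inner_self_eq_norm_mul_norm (α' + β')
      have h10 : ‖α'‖ * ‖α'‖ ≤ ‖α' + β'‖ * ‖α' + β'‖ :=
        mul_self_le_mul_self (norm_nonneg _) (le_trans hα'n hminle)
      linarith
    · -- inductive case: β' is not simple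
      have hself : 0 < ⟪β', β'⟫ := inner_self_pos' hβ'0
      have hsum' : ⟪β', β'⟫ = ∑ δ ∈ B.S, (b δ : ℝ) * ⟪δ, β'⟫ := by
        nth_rewrite 1 [hb]
        rw [sum_inner]
        exact Finset.sum_congr rfl fun δ _ => real_inner_smul_left _ _ _
      have hexγ : ∃ γ ∈ B.S, 0 < (b γ : ℝ) * ⟪γ, β'⟫ := by
        by_contra hno
        push_neg at hno
        rw [hsum'] at hself
        linarith [Finset.sum_nonpos hno]
      obtain ⟨γ, hγS, hγpos⟩ := hexγ
      have hγΔ : γ ∈ R.Δ := B.subset hγS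
      have hγ0 : γ ≠ 0 := R.nonzero γ hγΔ
      have hiβγ : 0 < ⟪γ, β'⟫ := by
        rcases mul_pos_iff.mp hγpos with ⟨_, h2⟩ | ⟨h1, _⟩
        · exact h2
        · exact absurd h1 (not_lt.mpr (by positivity))
      have hne : β' ≠ γ := fun h => hβS (h ▸ hγS)
      obtain ⟨n, hn⟩ := R.crystallographic β' hβ'Δ γ hγΔ
      have hn1 : 1 ≤ n := by
        have h1 : 0 < pairing β' γ :=
          pairing_pos_of_inner hγ0 (by rw [real_inner_comm]; exact hiβγ)
        rw [hn] at h1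
        exact_mod_cast h1
      obtain ⟨b'', hb''Δ, hb''sum, hb''lt⟩ := reflect_witness B b hβ'Δ hb hγS hβS hn hn1
      obtain ⟨nx, hnx⟩ := hxw γ hγΔ
      obtain ⟨na, hna⟩ := R.crystallographic α' hα'Δ γ hγΔ
      have htint : pairing (x + α') γ = ((nx + na : ℤ) : ℝ) := by
        rw [pairing_add_left, hnx, hna]
        push_cast
        ring
      by_cases ht : 0 ≤ pairing (x + α') γ
      · -- amplitude at γ nonnegative: reflect β' and recurse with the same α'
        have hpair'' : pairing (x + α') (β' - pairing β' γ • γ) ≤ -2 := by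
          have hnorm : ⟪β' - pairing β' γ • γ, β' - pairing β' γ • γ⟫ = ⟪β', β'⟫ :=
            inner_reflect_self hγ0 β'
          have hin : ⟪x + α', β' - pairing β' γ • γ⟫ ≤ ⟪x + α', β'⟫ := by
            rw [inner_sub_right, real_inner_smul_right]
            have h5 : 0 ≤ ⟪x + α', γ⟫ := inner_nonneg_of_pairing hγ0 ht
            have h6 : 0 < pairing β' γ := by rw [hn]; exact_mod_cast hn1
            nlinarith
          have h7 : pairing (x + α') (β' - pairing β' γ • γ) =
              2 * ⟪x + α', β' - pairing β' γ • γ⟫ / ⟪β', β'⟫ := by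
            rw [show pairing (x + α') (β' - pairing β' γ • γ) =
                2 * ⟪x + α', β' - pairing β' γ • γ⟫ /
                  ⟪β' - pairing β' γ • γ, β' - pairing β' γ • γ⟫ from rfl, hnorm]
          have h8 : pairing (x + α') β' = 2 * ⟪x + α', β'⟫ / ⟪β', β'⟫ := rfl
          rw [h7, div_le_iff₀ hself]
          rw [h8, div_le_iff₀ hself] at hpair
          linarith
        exact IH α' (β' - pairing β' γ • γ) ⟨hα'Δ, a, ha⟩ hα'n hα'le b'' hb''Δ hb''sum
          (by omega) hpair''
      · -- amplitude at γ negative: it is exactly -1; reflect both and recurse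
        push_neg at ht
        have htle : pairing (x + α') γ ≤ -1 := by
          rw [htint] at ht ⊢
          have h1 : nx + na < 0 := by exact_mod_cast ht
          have h2 : nx + na ≤ -1 := by omega
          exact_mod_cast h2
        have hxγ : 0 ≤ pairing x γ := hxd γ hγS
        have haddγ := pairing_add_left x α' γ
        have hαγ : pairing α' γ ≤ -1 := by linarith
        have hα'γne : α' ≠ γ := by
          intro h; rw [h, pairing_self hγ0] at hαγ; linarith
        have hα'γne2 : α' ≠ -γ :=
          ne_neg_of_witness B a _ ha (simple_witness B hγS) hα'0
        obtain ⟨q, hq⟩ := R.crystallographic γ hγΔ α' hα'Δ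
        have hprod2 := pairing_product_lt_four hα'Δ hγΔ hα'γne hα'γne2
        have hiαγ : ⟪α', γ⟫ < 0 := by
          rw [inner_eq_pairing hγ0]
          nlinarith [inner_self_pos' hγ0]
        have hq_neg : q ≤ -1 := by
          have h1 : ⟪γ, α'⟫ < 0 := by rw [real_inner_comm]; exact hiαγ
          have h2 : pairing γ α' < 0 := by
            rw [inner_eq_pairing hα'0] at h1
            nlinarith [inner_self_pos' hα'0]
          rw [hq] at h2
          have : q < 0 := by exact_mod_cast h2
          omega
        have hna_neg : na ≤ -1 := by
          rw [hna] at hαγ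
          exact_mod_cast hαγ
        have hsγΔ : α' + γ ∈ R.Δ := by
          have hcase : na = -1 ∨ q = -1 := by
            by_contra hcon
            push_neg at hcon
            have hna2 : na ≤ -2 := by omega
            have hq2 : q ≤ -2 := by omega
            rw [hna, hq] at hprod2
            have hna2' : (na:ℝ) ≤ -2 := by exact_mod_cast hna2
            have hq2' : (q:ℝ) ≤ -2 := by exact_mod_cast hq2
            nlinarith
          rcases hcase with h | h
          · have hr := R.reflect_mem γ hγΔ α' hα'Δ
            rw [hna, h] at hr
            have h2 : α' - (((-1:ℤ)):ℝ) • γ = α' + γ := by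
              push_cast
              rw [neg_one_smul, sub_neg_eq_add]
            rwa [h2] at hr
          · have hr := R.reflect_mem α' hα'Δ γ hγΔ
            rw [hq, h] at hr
            have h2 : γ - (((-1:ℤ)):ℝ) • α' = α' + γ := by
              push_cast
              rw [neg_one_smul, sub_neg_eq_add, add_comm]
            rwa [h2] at hr
        obtain ⟨c, hc⟩ := hα'le
        have hyγ : 0 ≤ pairing y γ := hyd γ hγS
        have hdom2 : domLE B (x + (α' + γ)) y := by
          rw [show x + (α' + γ) = (x + α') + γ from by abel]
          exact domLE_step B ⟨c, hc⟩ hγS (by rw [pairing_sub_left]; linarith)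
        have hip2 : B.IsPos (α' + γ) := isPos_add_simple B ⟨hα'Δ, a, ha⟩ hγS hsγΔ
        have hminle := hmin _ hip2 hdom2
        have e1 := real_inner_self_eq_norm_mul_norm (α' + γ)
        have hexp : ⟪α' + γ, α' + γ⟫ = ⟪α', α'⟫ + 2 * ⟪α', γ⟫ + ⟪γ, γ⟫ := by
          simp only [inner_add_left, inner_add_right]
          rw [real_inner_comm γ α']
          ring
        have hiag : ⟪α', γ⟫ = (na:ℝ) * ⟪γ, γ⟫ / 2 := by
          rw [inner_eq_pairing hγ0, hna]
        have hgpos := inner_self_pos' hγ0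
        have hm1' : ⟪αm, αm⟫ ≤ ⟪α' + γ, α' + γ⟫ := by
          rw [e1, e3]
          exact mul_self_le_mul_self (norm_nonneg _) hminle
        have hm2' : ⟪α', α'⟫ ≤ ⟪αm, αm⟫ := by
          rw [e2, e3]
          exact mul_self_le_mul_self (norm_nonneg _) hα'n
        have hna1 : na = -1 := by
          by_contra hcon
          have h1 : na ≤ -2 := by omega
          have h2 : (na:ℝ) ≤ -2 := by exact_mod_cast h1
          nlinarith
        have hpxa : pairing (x + α') γ = -1 := by
          rw [htint]
          have h9 : (0:ℝ) ≤ (nx:ℝ) := by rw [← hnx]; exact hxγ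
          have hnx0 : 0 ≤ nx := by exact_mod_cast h9
          have h10 : nx + na ≤ -1 := by
            have := htle
            rw [htint] at this
            exact_mod_cast this
          have : nx + na = -1 := by omega
          rw [this]
          push_cast
          ring
        have hnorm2 : ‖α' + γ‖ ≤ ‖αm‖ := by
          have hn3 : ⟪α' + γ, α' + γ⟫ = ⟪α', α'⟫ := by
            rw [hexp, hiag, hna1]
            push_cast
            ring
          have h11 : ‖α' + γ‖ * ‖α' + γ‖ ≤ ‖αm‖ * ‖αm‖ := by
            rw [← e1, ← e3, hn3]
            linarith
          nlinarith [norm_nonneg (α' + γ), norm_nonneg αm]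
        have hrefl : x + (α' + γ) = (x + α') - pairing (x + α') γ • γ := by
          rw [hpxa, neg_one_smul, sub_neg_eq_add]
          abel
        have hpair2 : pairing (x + (α' + γ)) (β' - pairing β' γ • γ) = pairing (x + α') β' := by
          rw [hrefl]
          exact pairing_reflect_reflect hγ0 (x + α') β'
        exact IH (α' + γ) (β' - pairing β' γ • γ) hip2 hnorm2 hdom2 b'' hb''Δ hb''sum
          (by omega) (by rw [hpair2]; exact hpair)

end Aux4


section Game

variable {V : Type*} [NormedAddCommGroup V] [InnerProductSpace ℝ V] {R : RootSystemData V}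

lemma allowed_of_winningCrit [DecidableEq V] (B : Base R) {v : V} (h : WinningCrit B v) :
    AllowedConf B v := fun γ hγ => h γ (isPos_simple B hγ)

lemma fire_eq_add {v γ : V} (h : pairing v γ = -1) : fireRoot v γ = v + γ := by
  unfold fireRoot
  rw [h, neg_one_smul, sub_neg_eq_add]

lemma pairing_eq_neg_one {v γ : V} {n : ℤ} (hn : pairing v γ = n) (hneg : pairing v γ < 0)
    (hall : -1 ≤ pairing v γ) : pairing v γ = -1 := by
  rw [hn] at hneg hall ⊢
  have h1 : n < 0 := by exact_mod_cast hneg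
  have h2 : (-1 : ℤ) ≤ n := by exact_mod_cast hall
  have h3 : n = -1 := by omega
  rw [h3]
  push_cast
  ring

lemma winningCrit_step [DecidableEq V] (B : Base R) {v γ : V} (hγ : γ ∈ B.S)
    (hw : WinningCrit B v) (hp : pairing v γ = -1) : WinningCrit B (v + γ) := by
  intro δ hδ
  have hγΔ : γ ∈ R.Δ := B.subset hγ
  have hγ0 : γ ≠ 0 := R.nonzero γ hγΔ
  by_cases hdg : δ = γ
  · subst hdg
    rw [pairing_add_left, hp, pairing_self hγ0]
    norm_num
  · have hne : δ ≠ γ := hdg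
    have hrefl : B.IsPos (δ - pairing δ γ • γ) := isPos_reflect B hδ hγ hne
    have h2 : v + γ = v - pairing v γ • γ := by rw [hp, neg_one_smul, sub_neg_eq_add]
    have h3 : δ = (δ - pairing δ γ • γ) - pairing (δ - pairing δ γ • γ) γ • γ :=
      (reflect_reflect hγ0 δ).symm
    calc (-1 : ℝ) ≤ pairing v (δ - pairing δ γ • γ) := hw _ hrefl
    _ = pairing (v - pairing v γ • γ)
        ((δ - pairing δ γ • γ) - pairing (δ - pairing δ γ • γ) γ • γ) :=
      (pairing_reflect_reflect hγ0 v _).symm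
    _ = pairing (v + γ) δ := by rw [← h2, ← h3]

lemma wint_step (B : Base R) {v γ : V} (hγΔ : γ ∈ R.Δ)
    (h : ∀ ρ ∈ R.Δ, ∃ n : ℤ, pairing v ρ = n) :
    ∀ ρ ∈ R.Δ, ∃ n : ℤ, pairing (v + γ) ρ = n := by
  intro ρ hρ
  obtain ⟨n, hn⟩ := h ρ hρ
  obtain ⟨m, hm⟩ := R.crystallographic γ hγΔ ρ hρ
  exact ⟨n + m, by rw [pairing_add_left, hn, hm]; push_cast; ring⟩

lemma wit_sum_lt [DecidableEq V] (B : Base R) {v y γ : V} (hγ : γ ∈ B.S) (c c' : V → ℕ)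
    (hc : y - v = ∑ δ ∈ B.S, (c δ : ℝ) • δ)
    (hc' : y - (v + γ) = ∑ δ ∈ B.S, (c' δ : ℝ) • δ) :
    (∑ δ ∈ B.S, c' δ) < ∑ δ ∈ B.S, c δ := by
  have hsum : ∑ δ ∈ B.S, ((c' δ : ℝ) + (if δ = γ then 1 else 0)) • δ =
      ∑ δ ∈ B.S, (c δ : ℝ) • δ := by
    have h1 : ∑ δ ∈ B.S, ((c' δ : ℝ) + (if δ = γ then 1 else 0)) • δ =
        (∑ δ ∈ B.S, (c' δ : ℝ) • δ) + ∑ δ ∈ B.S, (if δ = γ then (1:ℝ) else 0) • δ := by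
      rw [← Finset.sum_add_distrib]
      exact Finset.sum_congr rfl fun δ _ => add_smul _ _ _
    rw [h1, sum_single_smul B hγ, ← hc', ← hc, one_smul]
    abel
  have huniq := coeff_unique B _ _ hsum
  apply Finset.sum_lt_sum
  · intro δ hδ
    have h := huniq δ hδ
    by_cases hd : δ = γ
    · rw [if_pos hd] at h
      have : (c' δ : ℝ) + 1 = (c δ : ℝ) := h
      have : c' δ + 1 = c δ := by exact_mod_cast this
      omega
    · rw [if_neg hd, add_zero] at h
      have : c' δ = c δ := by exact_mod_cast h
      omega
  · refine ⟨γ, hγ, ?_⟩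
    have h := huniq γ hγ
    rw [if_pos rfl] at h
    have : (c' γ : ℝ) + 1 = (c γ : ℝ) := h
    have : c' γ + 1 = c γ := by exact_mod_cast this
    omega

lemma play_winning [DecidableEq V] (B : Base R) (y : V) (hyd : IsDominant B y) :
    ∀ N : ℕ, ∀ v : V, WinningCrit B v → (∀ ρ ∈ R.Δ, ∃ n : ℤ, pairing v ρ = n) →
      ∀ c : V → ℕ, (y - v = ∑ δ ∈ B.S, (c δ : ℝ) • δ) → (∑ δ ∈ B.S, c δ) < N →
      ∃ l : List V, CutoffLegal B v l ∧ IsDominant B (playRes v l) := by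
  intro N
  induction N with
  | zero => intro v _ _ c _ hlt; exact absurd hlt (Nat.not_lt_zero _)
  | succ N IH =>
    intro v hw hint c hc hlt
    by_cases hdom : IsDominant B v
    · refine ⟨[], ?_, ?_⟩
      · show AllowedConf B v
        exact allowed_of_winningCrit B hw
      · show IsDominant B (List.foldl fireRoot v [])
        simpa using hdom
    · have hex : ∃ γ ∈ B.S, pairing v γ < 0 := by
        by_contra h
        push_neg at h
        exact hdom fun γ hγ => h γ hγ
      obtain ⟨γ, hγ, hneg⟩ := hex
      obtain ⟨n, hn⟩ := hint γ (B.subset hγ)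
      have hall : -1 ≤ pairing v γ := hw γ (isPos_simple B hγ)
      have hp : pairing v γ = -1 := pairing_eq_neg_one hn hneg hall
      have hfire : fireRoot v γ = v + γ := fire_eq_add hp
      have hw' := winningCrit_step B hγ hw hp
      have hint' := wint_step B (B.subset hγ) hint
      have hle' : domLE B (v + γ) y :=
        domLE_step B ⟨c, hc⟩ hγ (by rw [pairing_sub_left]; linarith [hyd γ hγ])
      obtain ⟨c', hc'⟩ := hle'
      have hslt := wit_sum_lt B hγ c c' hc hc'
      obtain ⟨l, hl, hld⟩ := IH (v + γ) hw' hint' c' hc' (by omega)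
      refine ⟨γ :: l, ?_, ?_⟩
      · show AllowedConf B v ∧ γ ∈ B.S ∧ pairing v γ < 0 ∧ CutoffLegal B (fireRoot v γ) l
        exact ⟨allowed_of_winningCrit B hw, hγ, hneg, by rw [hfire]; exact hl⟩
      · have hres : playRes v (γ :: l) = playRes (v + γ) l := by
          show List.foldl fireRoot v (γ :: l) = List.foldl fireRoot (v + γ) l
          rw [List.foldl_cons, hfire]
        rw [hres]
        exact hld

lemma play_sandwich [DecidableEq V] (B : Base R) (x0 y : V) (hyd : IsDominant B y) :
    ∀ l : List V, ∀ v : V, domLE B x0 v → domLE B v y →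
      (∀ ρ ∈ R.Δ, ∃ n : ℤ, pairing v ρ = n) → CutoffLegal B v l →
      domLE B x0 (playRes v l) ∧ domLE B (playRes v l) y := by
  intro l
  induction l with
  | nil =>
    intro v h1 h2 _ _
    exact ⟨h1, h2⟩
  | cons γ t IH =>
    intro v h1 h2 hint hleg
    obtain ⟨hall, hγ, hneg, hleg'⟩ :
        AllowedConf B v ∧ γ ∈ B.S ∧ pairing v γ < 0 ∧ CutoffLegal B (fireRoot v γ) t := hleg
    obtain ⟨n, hn⟩ := hint γ (B.subset hγ)
    have hp : pairing v γ = -1 := pairing_eq_neg_one hn hneg (hall γ hγ)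
    have hfire : fireRoot v γ = v + γ := fire_eq_add hp
    have h1' : domLE B x0 (v + γ) := domLE_add_right B h1 hγ
    have h2' : domLE B (v + γ) y :=
      domLE_step B h2 hγ (by rw [pairing_sub_left]; linarith [hyd γ hγ])
    have hint' := wint_step B (B.subset hγ) hint
    have hres : playRes v (γ :: t) = playRes (v + γ) t := by
      show List.foldl fireRoot v (γ :: t) = List.foldl fireRoot (v + γ) t
      rw [List.foldl_cons, hfire]
    rw [hres]
    exact IH (v + γ) h1' h2' hint' (by rw [← hfire]; exact hleg')

end Game

/-- If `x ≺ y` are dominant weights and `α` is a positive root of minimum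
length such that `x + α ⪯ y`, then `x + α` is winning for the numbers game with a cutoff,
and the resulting final dominant configuration `z` satisfies `x + α ⪯ z ⪯ y`. -/
theorem stmt10 {V : Type*} [NormedAddCommGroup V] [InnerProductSpace ℝ V]
    [FiniteDimensional ℝ V] {R : RootSystemData V} (B : Base R) (x y α : V)
    (hxw : IsWeight R x) (hyw : IsWeight R y)
    (hxd : IsDominant B x) (hyd : IsDominant B y)
    (hlt : domLE B x y ∧ x ≠ y)
    (hα : B.IsPos α) (hle : domLE B (x + α) y)
    (hmin : ∀ β : V, B.IsPos β → domLE B (x + β) y → ‖α‖ ≤ ‖β‖) :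
    CutoffWinning B (x + α) ∧
    ∀ l : List V, CutoffLegal B (x + α) l → IsDominant B (playRes (x + α) l) →
      domLE B (x + α) (playRes (x + α) l) ∧ domLE B (playRes (x + α) l) y := by
  classical
  obtain ⟨hαΔ, a, haw⟩ := hα
  have hαpos : B.IsPos α := ⟨hαΔ, a, haw⟩
  have hwc : WinningCrit B (x + α) := by
    intro β hβ
    by_contra hcon
    push_neg at hcon
    obtain ⟨hβΔ, b, hbw⟩ := hβ
    obtain ⟨n1, hn1⟩ := hxw β hβΔ
    obtain ⟨n2, hn2⟩ := R.crystallographic α hαΔ β hβΔ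
    have hint : pairing (x + α) β = ((n1 + n2 : ℤ) : ℝ) := by
      rw [pairing_add_left, hn1, hn2]
      push_cast
      ring
    have hle2 : pairing (x + α) β ≤ -2 := by
      rw [hint] at hcon ⊢
      have h1 : ((n1 + n2 : ℤ) : ℝ) < -1 := hcon
      have h2 : (n1 + n2 : ℤ) < -1 := by exact_mod_cast h1
      have h3 : (n1 + n2 : ℤ) ≤ -2 := by omega
      exact_mod_cast h3
    exact claimA_aux B x y α hxd hyd hxw hmin ((∑ δ ∈ B.S, b δ) + 1) α β hαpos le_rfl hle
      b hβΔ hbw (by omega) hle2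
  have hint0 : ∀ ρ ∈ R.Δ, ∃ n : ℤ, pairing (x + α) ρ = n := by
    intro ρ hρ
    obtain ⟨n1, hn1⟩ := hxw ρ hρ
    obtain ⟨n2, hn2⟩ := R.crystallographic α hαΔ ρ hρ
    exact ⟨n1 + n2, by rw [pairing_add_left, hn1, hn2]; push_cast; ring⟩
  obtain ⟨c, hc⟩ := hle
  constructor
  · obtain ⟨l, hl, hld⟩ :=
      play_winning B y hyd ((∑ δ ∈ B.S, c δ) + 1) (x + α) hwc hint0 c hc (by omega)
    exact ⟨l, hl, hld⟩
  · intro l hleg _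
    exact play_sandwich B (x + α) y hyd l (x + α) (domLE_refl B _) ⟨c, hc⟩ hint0 hleg
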